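/- Given graded coalgebras C and D, the compositional coproduct on D∘C = ⊕_{n≥0} D_n ⊗ C^{⊗(n+1)}, defined by Δ(c_0⊗⋯⊗c_n⊗d) = Σ_{i=0}^{n} Σ_{(d), |d'|=i} Σ_{(c_i)} (c_0⊗⋯⊗c_{i-1}⊗c_i'⊗d') ⊗ (c_i''⊗c_{i+1}⊗⋯⊗c_n⊗d''), is coassociative. -/

import Mathlib

open TensorProduct

/-- A graded coalgebra with a distinguished (graded) basis `ι`, described by its
structure constants: `Δ(b) = ∑_{(p₁,p₂)} delta b (p₁,p₂) • p₁ ⊗ p₂` and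
`ε(b) = eps b`. -/
structure BasedGradedCoalgebra (K : Type) [Field K] where
  ι : Type
  deg : ι → ℕ
  delta : ι → ((ι × ι) →₀ K)
  eps : ι → K

namespace BasedGradedCoalgebra

variable {K : Type} [Field K]

/-- The underlying vector space of a based coalgebra. -/
abbrev space (C : BasedGradedCoalgebra K) : Type := C.ι →₀ K

/-- The coproduct of a based coalgebra, as a linear map. -/
noncomputable def comul (C : BasedGradedCoalgebra K) :
    C.space →ₗ[K] C.space ⊗[K] C.space :=
  Finsupp.lift (C.space ⊗[K] C.space) K C.ι fun b =>
    (C.delta b).sum fun p k =>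
      k • (Finsupp.single p.1 (1 : K) ⊗ₜ[K] Finsupp.single p.2 (1 : K))

/-- The counit of a based coalgebra, as a linear map. -/
noncomputable def counit (C : BasedGradedCoalgebra K) : C.space →ₗ[K] K :=
  Finsupp.lift K K C.ι C.eps

/-- The axioms making a `BasedGradedCoalgebra` an honest graded coassociative
counital coalgebra: coassociativity, the counit laws, and gradedness of `Δ` and `ε`. -/
def IsCoalgebra (C : BasedGradedCoalgebra K) : Prop :=
  (∀ x, (TensorProduct.assoc K C.space C.space C.space)
      ((TensorProduct.map C.comul LinearMap.id) (C.comul x)) =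
      (TensorProduct.map LinearMap.id C.comul) (C.comul x)) ∧
  (∀ x, (TensorProduct.lid K C.space)
      ((TensorProduct.map C.counit LinearMap.id) (C.comul x)) = x) ∧
  (∀ x, (TensorProduct.rid K C.space)
      ((TensorProduct.map LinearMap.id C.counit) (C.comul x)) = x) ∧
  (∀ b p, C.delta b p ≠ 0 → C.deg p.1 + C.deg p.2 = C.deg b) ∧
  (∀ b, C.eps b ≠ 0 → C.deg b = 0)

/-- The index set (basis) of the composition `D ∘ C = ⊕_n D_n ⊗ C^{⊗(n+1)}`:
a basis element `d` of `D` of degree `n` together with `n+1` basis elements of `C`. -/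
def compIdx (D C : BasedGradedCoalgebra K) : Type :=
  Σ d : D.ι, Fin (D.deg d + 1) → C.ι

/-- First part `(c₀, …, c_{m-1}, c)` of a split of the list of `C`-factors:
the first `m` entries of `cs` followed by `c`. -/
def front {A : Type} {n : ℕ} (m : ℕ) (cs : Fin (n + 1) → A) (c : A) :
    Fin (m + 1) → A :=
  fun j => if h : (j : ℕ) < m ∧ (j : ℕ) < n + 1 then cs ⟨j, h.2⟩ else c

/-- Second part `(c, c_{i+1}, …, c_n)` of a split of the list of `C`-factors:
`c` followed by the entries of `cs` from position `i+1` on. -/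
def back {A : Type} {n : ℕ} (i m : ℕ) (cs : Fin (n + 1) → A) (c : A) :
    Fin (m + 1) → A :=
  fun j => if h : 0 < (j : ℕ) ∧ i + (j : ℕ) < n + 1 then cs ⟨i + j, h.2⟩ else c

/-- The `i`-th index into the `C`-factors over `d` (with junk fallback). -/
def idx (D : BasedGradedCoalgebra K) (d : D.ι) (i : ℕ) : Fin (D.deg d + 1) :=
  if h : i < D.deg d + 1 then ⟨i, h⟩ else 0

/-- The compositional coproduct on `D ∘ C`:
`Δ(c₀ ⊗ ⋯ ⊗ c_n ⊗ d) = ∑_{i=0}^{n} ∑_{(d), |d'| = i} ∑_{(c_i)}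
  (c₀ ⊗ ⋯ ⊗ c_{i-1} ⊗ c_i' ⊗ d') ⊗ (c_i'' ⊗ c_{i+1} ⊗ ⋯ ⊗ c_n ⊗ d'')`. -/
noncomputable def compComul (D C : BasedGradedCoalgebra K) :
    (compIdx D C →₀ K) →ₗ[K] (compIdx D C →₀ K) ⊗[K] (compIdx D C →₀ K) :=
  Finsupp.lift ((compIdx D C →₀ K) ⊗[K] (compIdx D C →₀ K)) K (compIdx D C) fun e =>
    ∑ q ∈ (D.delta e.1).support,
      ∑ r ∈ (C.delta (e.2 (idx D e.1 (D.deg q.1)))).support,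
        (D.delta e.1 q * C.delta (e.2 (idx D e.1 (D.deg q.1))) r) •
          (Finsupp.single (⟨q.1, front (D.deg q.1) e.2 r.1⟩ : compIdx D C) (1 : K) ⊗ₜ[K]
            Finsupp.single (⟨q.2, back (D.deg q.1) (D.deg q.2) e.2 r.2⟩ : compIdx D C)
              (1 : K))

end BasedGradedCoalgebra

section Generic

set_option maxHeartbeats 1000000
set_option synthInstance.maxHeartbeats 400000

variable {K : Type} [Field K] {ι σ : Type} [DecidableEq ι]

noncomputable def trip (K ι : Type) [Field K] :
    ((ι →₀ K) ⊗[K] ((ι →₀ K) ⊗[K] (ι →₀ K))) ≃ₗ[K] (ι × ι × ι →₀ K) :=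
  (TensorProduct.congr (LinearEquiv.refl K (ι →₀ K)) (finsuppTensorFinsupp' K ι ι)).trans
    (finsuppTensorFinsupp' K ι (ι × ι))

lemma trip_single (a b c : ι) (x y z : K) :
    trip K ι (Finsupp.single a x ⊗ₜ[K] (Finsupp.single b y ⊗ₜ[K] Finsupp.single c z)) =
      Finsupp.single (a, b, c) (x * (y * z)) := by
  rw [trip, LinearEquiv.trans_apply, TensorProduct.congr_tmul, LinearEquiv.refl_apply,
    finsuppTensorFinsupp'_single_tmul_single, finsuppTensorFinsupp'_single_tmul_single]

noncomputable def genComul (s : ι → Finset σ) (κ : ι → σ → K) (π₁ π₂ : ι → σ → ι) :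
    (ι →₀ K) →ₗ[K] (ι →₀ K) ⊗[K] (ι →₀ K) :=
  Finsupp.lift ((ι →₀ K) ⊗[K] (ι →₀ K)) K ι fun e =>
    ∑ z ∈ s e, κ e z • (Finsupp.single (π₁ e z) (1 : K) ⊗ₜ[K] Finsupp.single (π₂ e z) (1 : K))

lemma genComul_single (s : ι → Finset σ) (κ : ι → σ → K) (π₁ π₂ : ι → σ → ι) (e : ι) :
    genComul s κ π₁ π₂ (Finsupp.single e 1) =
      ∑ z ∈ s e, κ e z • (Finsupp.single (π₁ e z) (1 : K) ⊗ₜ[K] Finsupp.single (π₂ e z) (1 : K)) := by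
  simp [genComul]

open Classical in
lemma gen_L (s : ι → Finset σ) (κ : ι → σ → K) (π₁ π₂ : ι → σ → ι) (e : ι) (t : ι × ι × ι) :
    trip K ι ((TensorProduct.assoc K _ _ _)
      ((TensorProduct.map (genComul s κ π₁ π₂) LinearMap.id)
        (genComul s κ π₁ π₂ (Finsupp.single e 1)))) t =
      ∑ z ∈ s e, ∑ z' ∈ s (π₁ e z), κ e z * κ (π₁ e z) z' *
        (if (π₁ (π₁ e z) z', π₂ (π₁ e z) z', π₂ e z) = t then 1 else 0) := by
  rw [genComul_single, map_sum, map_sum, map_sum, Finsupp.finset_sum_apply]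
  refine Finset.sum_congr rfl fun z _ => ?_
  rw [map_smul, map_smul, map_smul, TensorProduct.map_tmul, genComul_single,
    TensorProduct.sum_tmul, map_sum, map_sum, Finsupp.smul_apply, Finsupp.finset_sum_apply,
    smul_eq_mul, Finset.mul_sum]
  refine Finset.sum_congr rfl fun z' _ => ?_
  rw [← TensorProduct.smul_tmul', map_smul, map_smul, TensorProduct.assoc_tmul, LinearMap.id_apply, trip_single, Finsupp.smul_apply, Finsupp.single_apply, smul_eq_mul]
  split_ifs <;> ring

open Classical in
lemma gen_R (s : ι → Finset σ) (κ : ι → σ → K) (π₁ π₂ : ι → σ → ι) (e : ι) (t : ι × ι × ι) :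
    trip K ι ((TensorProduct.map LinearMap.id (genComul s κ π₁ π₂))
        (genComul s κ π₁ π₂ (Finsupp.single e 1))) t =
      ∑ z ∈ s e, ∑ z' ∈ s (π₂ e z), κ e z * κ (π₂ e z) z' *
        (if (π₁ e z, π₁ (π₂ e z) z', π₂ (π₂ e z) z') = t then 1 else 0) := by
  rw [genComul_single, map_sum, map_sum, Finsupp.finset_sum_apply]
  refine Finset.sum_congr rfl fun z _ => ?_
  rw [map_smul, map_smul, TensorProduct.map_tmul, genComul_single, LinearMap.id_apply,
    TensorProduct.tmul_sum, map_sum, Finsupp.smul_apply, Finsupp.finset_sum_apply,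
    smul_eq_mul, Finset.mul_sum]
  refine Finset.sum_congr rfl fun z' _ => ?_
  rw [TensorProduct.tmul_smul, map_smul, trip_single, Finsupp.smul_apply, Finsupp.single_apply,
    smul_eq_mul]
  split_ifs <;> ring

open Classical in
lemma gen_coassoc_iff (s : ι → Finset σ) (κ : ι → σ → K) (π₁ π₂ : ι → σ → ι) :
    (∀ x, (TensorProduct.assoc K (ι →₀ K) (ι →₀ K) (ι →₀ K))
        ((TensorProduct.map (genComul s κ π₁ π₂) LinearMap.id) (genComul s κ π₁ π₂ x)) =
      (TensorProduct.map LinearMap.id (genComul s κ π₁ π₂)) (genComul s κ π₁ π₂ x)) ↔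
    (∀ (e : ι) (t : ι × ι × ι),
      (∑ z ∈ s e, ∑ z' ∈ s (π₁ e z), κ e z * κ (π₁ e z) z' *
        (if (π₁ (π₁ e z) z', π₂ (π₁ e z) z', π₂ e z) = t then 1 else 0)) =
      (∑ z ∈ s e, ∑ z' ∈ s (π₂ e z), κ e z * κ (π₂ e z) z' *
        (if (π₁ e z, π₁ (π₂ e z) z', π₂ (π₂ e z) z') = t then 1 else 0))) := by
  constructor
  · intro h e t
    rw [← gen_L s κ π₁ π₂ e t, ← gen_R s κ π₁ π₂ e t, h (Finsupp.single e 1)]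
  · intro h x
    have key : ∀ e : ι, (TensorProduct.assoc K (ι →₀ K) (ι →₀ K) (ι →₀ K))
        ((TensorProduct.map (genComul s κ π₁ π₂) LinearMap.id)
          (genComul s κ π₁ π₂ (Finsupp.single e 1))) =
        (TensorProduct.map LinearMap.id (genComul s κ π₁ π₂))
          (genComul s κ π₁ π₂ (Finsupp.single e 1)) := by
      intro e
      apply (trip K ι).injective
      apply Finsupp.ext
      intro t
      rw [gen_L, gen_R]
      exact h e t
    induction x using Finsupp.induction_linear with
    | zero => simp
    | add a b ha hb => simp only [map_add, ha, hb]
    | single a k =>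
        have hk : (Finsupp.single a k : ι →₀ K) = k • Finsupp.single a 1 := by
          rw [Finsupp.smul_single, smul_eq_mul, mul_one]
        rw [hk]
        simp only [map_smul]
        rw [key a]

end Generic

namespace BasedGradedCoalgebra

variable {K : Type} [Field K]

section FB
variable {A : Type} {n : ℕ} (cs : Fin (n + 1) → A)

lemma front_apply_lt (m : ℕ) (c : A) (j : Fin (m + 1)) (h1 : (j : ℕ) < m)
    (h2 : (j : ℕ) < n + 1) : front m cs c j = cs ⟨j, h2⟩ := dif_pos ⟨h1, h2⟩

lemma front_apply_ge (m : ℕ) (c : A) (j : Fin (m + 1)) (h : m ≤ (j : ℕ)) :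
    front m cs c j = c := dif_neg (by omega)

lemma back_apply_pos (i m : ℕ) (c : A) (j : Fin (m + 1)) (h1 : 0 < (j : ℕ))
    (h2 : i + (j : ℕ) < n + 1) : back i m cs c j = cs ⟨i + j, h2⟩ := dif_pos ⟨h1, h2⟩

lemma back_apply_bad (i m : ℕ) (c : A) (j : Fin (m + 1))
    (h : ¬(0 < (j : ℕ) ∧ i + (j : ℕ) < n + 1)) : back i m cs c j = c := dif_neg h

lemma back_apply_zero (i m : ℕ) (c : A) : back i m cs c 0 = c := by
  apply back_apply_bad; simp

lemma front_apply_last (m : ℕ) (c : A) : front m cs c (Fin.last m) = c :=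
  front_apply_ge cs m c _ (by simp)

/-- F1 -/
lemma front_front (m m' : ℕ) (x y : A) (h1 : m ≤ m') (h2 : m' ≤ n) :
    front m (front m' cs y) x = front m cs x := by
  funext j
  by_cases hj : (j : ℕ) < m
  · rw [front_apply_lt _ m x j hj (by omega), front_apply_lt cs m x j hj (by omega),
      front_apply_lt cs m' y _ (by simp; omega) (by simp; omega)]
  · rw [front_apply_ge _ m x j (by omega), front_apply_ge cs m x j (by omega)]

/-- F4 : bridge between the two `fb`-conditions, `0 < i_b` case -/
lemma back_front_eq_front_back (ia ib m' : ℕ) (x y : A) (hb : 0 < ib) (hm : ib ≤ m')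
    (hn : ia + ib ≤ n) :
    back ia ib (front (ia + ib) cs y) x = front ib (back ia m' cs x) y := by
  funext j
  rcases Nat.eq_zero_or_pos (j : ℕ) with h0 | h0
  · rw [back_apply_bad _ ia ib x j (by omega),
      front_apply_lt _ ib y j (by omega) (by omega),
      back_apply_bad cs ia m' x _ (by simpa using by omega)]
  · by_cases hjb : (j : ℕ) < ib
    · rw [back_apply_pos _ ia ib x j h0 (by omega), front_apply_lt _ ib y j hjb (by omega),
        front_apply_lt cs (ia+ib) y _ (by simp; omega) (by simp; omega),
        back_apply_pos cs ia m' x _ (by simpa using h0) (by simpa using by omega)]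
    · have hje : (j : ℕ) = ib := by omega
      rw [back_apply_pos _ ia ib x j h0 (by omega), front_apply_ge _ ib y j (by omega),
        front_apply_ge cs (ia+ib) y _ (by simp; omega)]

/-- F5 : bridge between the two `fc`-conditions -/
lemma back_back (ia ib ic m' : ℕ) (x y : A) (h1 : ib + ic ≤ m') (h2 : ia + ib + ic ≤ n) :
    back ib ic (back ia m' cs x) y = back (ia + ib) ic cs y := by
  funext j
  rcases Nat.eq_zero_or_pos (j : ℕ) with h0 | h0
  · rw [back_apply_bad _ ib ic y j (by omega), back_apply_bad cs (ia+ib) ic y j (by omega)]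
  · have hj : (j : ℕ) ≤ ic := by omega
    rw [back_apply_pos _ ib ic y j h0 (by omega), back_apply_pos cs (ia+ib) ic y j h0 (by omega),
      back_apply_pos cs ia m' x (⟨ib + (j : ℕ), by omega⟩ : Fin (m' + 1))
        (by show 0 < ib + (j : ℕ); omega) (by show ia + (ib + (j : ℕ)) < n + 1; omega)]
    congr 1
    simp; omega

/-- P1 -/
lemma front_eq_iff (m : ℕ) (x : A) (f : Fin (m + 1) → A) :
    front m cs x = f ↔ x = f (Fin.last m) ∧ front m cs (f (Fin.last m)) = f := by
  constructor
  · intro h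
    have hx : x = f (Fin.last m) := by rw [← h, front_apply_last]
    exact ⟨hx, by rw [← hx, h]⟩
  · rintro ⟨h1, h2⟩; rw [h1, h2]

/-- P2 -/
lemma back_eq_iff (i m : ℕ) (x : A) (f : Fin (m + 1) → A) :
    back i m cs x = f ↔ x = f 0 ∧ back i m cs (f 0) = f := by
  constructor
  · intro h
    have hx : x = f 0 := by rw [← h, back_apply_zero]
    exact ⟨hx, by rw [← hx, h]⟩
  · rintro ⟨h1, h2⟩; rw [h1, h2]

/-- P3 -/
lemma back_front_eq_iff (i m : ℕ) (x y : A) (f : Fin (m + 1) → A) (hb : 0 < m) :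
    back i m (front (i + m) cs y) x = f ↔
      y = f (Fin.last m) ∧ back i m (front (i + m) cs (f (Fin.last m))) x = f := by
  constructor
  · intro h
    have hy : y = f (Fin.last m) := by
      rw [← h, back_apply_pos _ i m x (Fin.last m) (by simpa using hb) (by simp),
        front_apply_ge cs (i+m) y _ (by simp)]
    exact ⟨hy, by rw [← hy, h]⟩
  · rintro ⟨h1, h2⟩; rw [h1, h2]

/-- P4 -/
lemma front_back_eq_iff (i m m' : ℕ) (x y : A) (f : Fin (m + 1) → A) (hb : 0 < m) :
    front m (back i m' cs x) y = f ↔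
      x = f 0 ∧ front m (back i m' cs (f 0)) y = f := by
  constructor
  · intro h
    have hx : x = f 0 := by
      have := congrFun h 0
      rw [front_apply_lt _ m y 0 (by simpa using hb) (by simp),
        back_apply_bad cs i m' x _ (by simp)] at this
      exact this
    exact ⟨hx, by rw [← hx, h]⟩
  · rintro ⟨h1, h2⟩; rw [h1, h2]

/-- P6 -/
lemma back_zero_eq_self (i : ℕ) (f : Fin 1 → A) : back i 0 cs (f 0) = f := by
  funext j
  have hj : j = 0 := Fin.ext (by omega)
  subst hj
  rw [back_apply_zero]

lemma front_zero_eq_self (f : Fin 1 → A) (y : A) : front 0 cs (f 0) = f := by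
  funext j
  have hj : j = 0 := Fin.ext (by omega)
  subst hj
  rw [front_apply_ge _ _ _ _ (by simp)]

lemma back_zero_eq_iff (i : ℕ) (x : A) (f : Fin 1 → A) :
    back i 0 cs x = f ↔ x = f 0 := by
  constructor
  · intro h; rw [← h, back_apply_zero]
  · intro h; rw [h]; exact back_zero_eq_self cs i f

lemma front_zero_eq_iff (x : A) (f : Fin 1 → A) :
    front 0 cs x = f ↔ x = f 0 := by
  constructor
  · intro h; rw [← h, front_apply_ge _ _ _ _ (by simp)]
  · intro h; rw [h]; exact front_zero_eq_self cs f x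

lemma back_eq_iff_of_zero (i m : ℕ) (hm : m = 0) (x : A) (f : Fin (m + 1) → A) :
    back i m cs x = f ↔ x = f 0 := by
  subst hm; exact back_zero_eq_iff cs i x f

lemma front_eq_iff_of_zero (m : ℕ) (hm : m = 0) (x : A) (f : Fin (m + 1) → A) :
    front m cs x = f ↔ x = f 0 := by
  subst hm; exact front_zero_eq_iff cs x f

end FB

lemma idx_eq (D : BasedGradedCoalgebra K) (d : D.ι) (i : ℕ) (h : i < D.deg d + 1) :
    idx D d i = ⟨i, h⟩ := dif_pos h

/-- `comul` as a generic comultiplication. -/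
lemma comul_eq_gen (C : BasedGradedCoalgebra K) :
    C.comul = genComul (fun b => (C.delta b).support) (fun b p => C.delta b p)
      (fun _ p => p.1) (fun _ p => p.2) := rfl

open Classical in
/-- scalar form of coassociativity -/
lemma scalar_coassoc (C : BasedGradedCoalgebra K)
    (h : ∀ x, (TensorProduct.assoc K C.space C.space C.space)
      ((TensorProduct.map C.comul LinearMap.id) (C.comul x)) =
      (TensorProduct.map LinearMap.id C.comul) (C.comul x))
    (b x y z : C.ι) :
    (∑ p ∈ (C.delta b).support, if p.2 = z then C.delta b p * C.delta p.1 (x, y) else 0) =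
    (∑ p ∈ (C.delta b).support, if p.1 = x then C.delta b p * C.delta p.2 (y, z) else 0) := by
  rw [comul_eq_gen] at h
  have h' := (gen_coassoc_iff _ _ _ _).mp h b (x, y, z)
  have eL : ∀ p : C.ι × C.ι,
      (∑ p' ∈ (C.delta p.1).support, C.delta b p * C.delta p.1 p' *
        (if (p'.1, p'.2, p.2) = (x, y, z) then 1 else 0)) =
      (if p.2 = z then C.delta b p * C.delta p.1 (x, y) else 0) := by
    intro p
    rw [Finset.sum_eq_single (x, y)]
    · simp only [Prod.mk.injEq, eq_self_iff_true, true_and, and_true]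
      split_ifs <;> ring
    · intro p' _ hp'
      rw [if_neg, mul_zero]
      intro hc
      apply hp'
      simp only [Prod.mk.injEq] at hc
      exact Prod.ext hc.1 hc.2.1
    · intro hx
      rw [Finsupp.notMem_support_iff.mp hx, mul_zero, zero_mul]
  have eR : ∀ p : C.ι × C.ι,
      (∑ p' ∈ (C.delta p.2).support, C.delta b p * C.delta p.2 p' *
        (if (p.1, p'.1, p'.2) = (x, y, z) then 1 else 0)) =
      (if p.1 = x then C.delta b p * C.delta p.2 (y, z) else 0) := by
    intro p
    rw [Finset.sum_eq_single (y, z)]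
    · simp only [Prod.mk.injEq, eq_self_iff_true, true_and, and_true]
      split_ifs <;> ring
    · intro p' _ hp'
      rw [if_neg, mul_zero]
      intro hc
      apply hp'
      simp only [Prod.mk.injEq] at hc
      exact Prod.ext hc.2.1 hc.2.2
    · intro hx
      rw [Finsupp.notMem_support_iff.mp hx, mul_zero, zero_mul]
  calc (∑ p ∈ (C.delta b).support, if p.2 = z then C.delta b p * C.delta p.1 (x, y) else 0)
      = ∑ p ∈ (C.delta b).support, ∑ p' ∈ (C.delta p.1).support, C.delta b p * C.delta p.1 p' *
          (if (p'.1, p'.2, p.2) = (x, y, z) then 1 else 0) := by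
        exact (Finset.sum_congr rfl fun p _ => eL p).symm
    _ = ∑ p ∈ (C.delta b).support, ∑ p' ∈ (C.delta p.2).support, C.delta b p * C.delta p.2 p' *
          (if (p.1, p'.1, p'.2) = (x, y, z) then 1 else 0) := h'
    _ = _ := Finset.sum_congr rfl fun p _ => eR p

end BasedGradedCoalgebra


namespace BasedGradedCoalgebra

variable {K : Type} [Field K]

variable (D C : BasedGradedCoalgebra K)

/-- index type for the generic presentation of `compComul` -/
def cSig (D C : BasedGradedCoalgebra K) : Type := Σ _ : D.ι × D.ι, C.ι × C.ι

def cFin (e : compIdx D C) : Finset (cSig D C) :=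
  ((D.delta e.1).support).sigma
    (fun q => (C.delta (e.2 (idx D e.1 (D.deg q.1)))).support)

def cKap (e : compIdx D C) (z : cSig D C) : K :=
  D.delta e.1 z.1 * C.delta (e.2 (idx D e.1 (D.deg z.1.1))) z.2

def cP1 (e : compIdx D C) (z : cSig D C) : compIdx D C :=
  ⟨z.1.1, front (D.deg z.1.1) e.2 z.2.1⟩

def cP2 (e : compIdx D C) (z : cSig D C) : compIdx D C :=
  ⟨z.1.2, back (D.deg z.1.1) (D.deg z.1.2) e.2 z.2.2⟩

lemma compComul_eq_gen :
    compComul D C = genComul (cFin D C) (cKap D C) (cP1 D C) (cP2 D C) := by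
  unfold compComul genComul cFin cKap cP1 cP2
  congr 1
  funext e
  exact (Finset.sum_sigma ((D.delta e.1).support)
    (fun q => (C.delta (e.2 (idx D e.1 (D.deg q.1)))).support)
    (fun z => (D.delta e.1 z.1 * C.delta (e.2 (idx D e.1 (D.deg z.1.1))) z.2) •
      (Finsupp.single (⟨z.1.1, front (D.deg z.1.1) e.2 z.2.1⟩ : compIdx D C) (1:K) ⊗ₜ[K]
        Finsupp.single (⟨z.1.2, back (D.deg z.1.1) (D.deg z.1.2) e.2 z.2.2⟩ : compIdx D C) (1:K)))).symm


lemma compIdx_mk_inj {D C : BasedGradedCoalgebra K} {x : D.ι}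
    {f g : Fin (D.deg x + 1) → C.ι} :
    ((⟨x, f⟩ : compIdx D C) = ⟨x, g⟩) ↔ f = g := by
  simp [compIdx]

open Classical in
/-- The common value of the two collapsed inner sums. -/
noncomputable def Phi (D C : BasedGradedCoalgebra K) (d : D.ι) (cs : Fin (D.deg d + 1) → C.ι)
    (da : D.ι) (fa : Fin (D.deg da + 1) → C.ι) (db : D.ι) (fb : Fin (D.deg db + 1) → C.ι)
    (dc : D.ι) (fc : Fin (D.deg dc + 1) → C.ι) : K :=
  if 0 < D.deg db then
    (if (front (D.deg da) cs (fa (Fin.last (D.deg da))) = fa ∧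
         back (D.deg da) (D.deg db)
           (front (D.deg da + D.deg db) cs (fb (Fin.last (D.deg db)))) (fb 0) = fb ∧
         back (D.deg da + D.deg db) (D.deg dc) cs (fc 0) = fc) then
      C.delta (cs (idx D d (D.deg da))) (fa (Fin.last (D.deg da)), fb 0) *
      C.delta (cs (idx D d (D.deg da + D.deg db))) (fb (Fin.last (D.deg db)), fc 0)
     else 0)
  else
    (if (front (D.deg da) cs (fa (Fin.last (D.deg da))) = fa ∧
         back (D.deg da) (D.deg dc) cs (fc 0) = fc) then
      ∑ p ∈ (C.delta (cs (idx D d (D.deg da)))).support,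
        (if p.2 = fc 0 then
          C.delta (cs (idx D d (D.deg da))) p * C.delta p.1 (fa (Fin.last (D.deg da)), fb 0)
         else 0)
     else 0)

open Classical in
lemma claimL (D C : BasedGradedCoalgebra K) [DecidableEq (compIdx D C)]
    (hD4 : ∀ b p, D.delta b p ≠ 0 → D.deg p.1 + D.deg p.2 = D.deg b)
    (d : D.ι) (cs : Fin (D.deg d + 1) → C.ι) (da : D.ι) (fa : Fin (D.deg da + 1) → C.ι)
    (db : D.ι) (fb : Fin (D.deg db + 1) → C.ι) (dc : D.ι) (fc : Fin (D.deg dc + 1) → C.ι)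
    (q : D.ι × D.ι) (hq : D.delta d q ≠ 0) :
    (∑ r ∈ (C.delta (cs (idx D d (D.deg q.1)))).support,
      ∑ z' ∈ ((D.delta q.1).support.sigma fun q' =>
          (C.delta (front (D.deg q.1) cs r.1 (idx D q.1 (D.deg q'.1)))).support),
        D.delta d q * C.delta (cs (idx D d (D.deg q.1))) r *
            (D.delta q.1 z'.1 *
              C.delta (front (D.deg q.1) cs r.1 (idx D q.1 (D.deg z'.1.1))) z'.2) *
          (if ((⟨z'.1.1, front (D.deg z'.1.1) (front (D.deg q.1) cs r.1) z'.2.1⟩ : compIdx D C),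
                (⟨z'.1.2, back (D.deg z'.1.1) (D.deg z'.1.2) (front (D.deg q.1) cs r.1)
                    z'.2.2⟩ : compIdx D C),
                (⟨q.2, back (D.deg q.1) (D.deg q.2) cs r.2⟩ : compIdx D C)) =
              ((⟨da, fa⟩ : compIdx D C), (⟨db, fb⟩ : compIdx D C), (⟨dc, fc⟩ : compIdx D C))
            then 1 else 0)) =
    (if q.2 = dc then D.delta d q * D.delta q.1 (da, db) else 0) *
      Phi D C d cs da fa db fb dc fc := by
  obtain ⟨m, m2⟩ := q
  dsimp only at hq ⊢
  by_cases hm2 : m2 = dc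
  swap
  · rw [if_neg hm2, zero_mul]
    refine Finset.sum_eq_zero fun r hr => Finset.sum_eq_zero fun z' hz' => ?_
    refine mul_eq_zero_of_right _ (if_neg ?_)
    intro hcon
    simp only [Prod.mk.injEq] at hcon
    exact hm2 (congrArg Sigma.fst hcon.2.2)
  subst m2
  rw [if_pos rfl]
  refine (Finset.sum_congr rfl fun r hr =>
    Finset.sum_eq_single (⟨(da, db), (fa (Fin.last (D.deg da)), fb 0)⟩ : cSig D C)
      (by
        rintro ⟨⟨x1, x2⟩, y1, y2⟩ hz' hne
        refine mul_eq_zero_of_right _ (if_neg ?_)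
        intro hcon
        simp only [Prod.mk.injEq] at hcon
        obtain ⟨h1, h2, h3⟩ := hcon
        have hx1 : x1 = da := congrArg Sigma.fst h1
        subst x1
        have hx2 : x2 = db := congrArg Sigma.fst h2
        subst x2
        rw [compIdx_mk_inj] at h1 h2
        apply hne
        have e1 : y1 = fa (Fin.last (D.deg da)) := by
          rw [← h1, front_apply_last]
        have e2 : y2 = fb 0 := by
          rw [← h2, back_apply_zero]
        rw [e1, e2]
      )
      (by
        intro hz0
        rcases (by
          by_cases hA : (da, db) ∈ (D.delta m).support
          · exact Or.inr (Finsupp.notMem_support_iff.mp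
              (fun h => hz0 (Finset.mem_sigma.mpr ⟨hA, h⟩)))
          · exact Or.inl (Finsupp.notMem_support_iff.mp hA) :
            D.delta m (da, db) = 0 ∨
            C.delta (front (D.deg m) cs r.1 (idx D m (D.deg da)))
              (fa (Fin.last (D.deg da)), fb 0) = 0) with h | h <;>
          simp [h]
      )).trans ?_
  by_cases hdm : D.delta m (da, db) = 0
  · simp [hdm]
  have hdeg := hD4 m (da, db) hdm
  have hnd := hD4 d (m, dc) hq
  dsimp only at hdeg hnd
  rcases Nat.eq_zero_or_pos (D.deg db) with hb0 | hbpos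
  · -- D.deg db = 0
    unfold Phi
    rw [if_neg (by omega)]
    have hdm' : D.deg m = D.deg da := by omega
    have wI : idx D d (D.deg m) = idx D d (D.deg da) := by rw [hdm']
    have wA : ∀ x : C.ι × C.ι, front (D.deg m) cs x.1 (idx D m (D.deg da)) = x.1 := by
      intro x
      rw [idx_eq D m _ (by omega), front_apply_ge _ _ _ _ (by simp; omega)]
    have w5 : ∀ y : C.ι, ((⟨da, front (D.deg da) (front (D.deg m) cs y)
        (fa (Fin.last (D.deg da)))⟩ : compIdx D C) = ⟨da, fa⟩) ↔
        front (D.deg da) cs (fa (Fin.last (D.deg da))) = fa := by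
      intro y
      rw [compIdx_mk_inj, front_front cs _ _ _ _ (by omega) (by omega)]
    have w6 : ∀ y : C.ι, ((⟨db, back (D.deg da) (D.deg db) (front (D.deg m) cs y)
        (fb 0)⟩ : compIdx D C) = ⟨db, fb⟩) ↔ True := by
      intro y
      rw [compIdx_mk_inj, back_eq_iff_of_zero _ (D.deg da) (D.deg db) hb0]
      simp
    have w7 : ∀ z : C.ι, ((⟨dc, back (D.deg m) (D.deg dc) cs z⟩ : compIdx D C) = ⟨dc, fc⟩) ↔
        (z = fc 0 ∧ back (D.deg da) (D.deg dc) cs (fc 0) = fc) := by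
      intro z
      have hw : ∀ x : C.ι, back (D.deg m) (D.deg dc) cs x = back (D.deg da) (D.deg dc) cs x := by
        intro x; rw [hdm']
      rw [compIdx_mk_inj, hw, back_eq_iff]
    rw [wI]
    by_cases hco : (front (D.deg da) cs (fa (Fin.last (D.deg da))) = fa ∧
        back (D.deg da) (D.deg dc) cs (fc 0) = fc)
    · rw [if_pos hco, Finset.mul_sum]
      refine Finset.sum_congr rfl fun r hr => ?_
      dsimp only
      rw [wA r]
      split_ifs with h1 h2 h3 <;> try ring
      · simp only [Prod.mk.injEq] at h1
        exact absurd ((w7 r.2).mp h1.2.2).1 h2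
      · exact absurd (by
          simp only [Prod.mk.injEq]
          exact ⟨(w5 r.1).mpr hco.1, (w6 r.1).mpr trivial, (w7 r.2).mpr ⟨h3, hco.2⟩⟩) h1
    · rw [if_neg hco, mul_zero]
      refine Finset.sum_eq_zero fun r hr => ?_
      refine mul_eq_zero_of_right _ (if_neg ?_)
      dsimp only
      intro hcon
      simp only [Prod.mk.injEq] at hcon
      exact hco ⟨(w5 r.1).mp hcon.1, ((w7 r.2).mp hcon.2.2).2⟩
  · -- 0 < D.deg db
    unfold Phi
    rw [if_pos hbpos]
    refine (Finset.sum_eq_single (fb (Fin.last (D.deg db)), fc 0)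
      (by
        rintro ⟨u1, u2⟩ hr hne
        refine mul_eq_zero_of_right _ (if_neg ?_)
        intro hcon
        simp only [Prod.mk.injEq] at hcon
        obtain ⟨h1, h2, h3⟩ := hcon
        rw [compIdx_mk_inj] at h2 h3
        apply hne
        have e1 : u1 = fb (Fin.last (D.deg db)) := by
          have := congrFun h2 (Fin.last (D.deg db))
          rw [back_apply_pos _ _ _ _ _ (by simp [hbpos]) (by simp; omega),
            front_apply_ge _ _ _ _ (by simp; omega)] at this
          exact this
        have e2 : u2 = fc 0 := by
          have := congrFun h3 0
          rw [back_apply_zero] at this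
          exact this
        rw [e1, e2]
      ) (by
        intro hr0
        rw [Finsupp.notMem_support_iff.mp hr0]
        ring
      )).trans ?_
    have w1 : front (D.deg m) cs (fb (Fin.last (D.deg db))) (idx D m (D.deg da)) =
        cs (idx D d (D.deg da)) := by
      rw [idx_eq D m _ (by omega), idx_eq D d _ (by omega),
        front_apply_lt _ _ _ _ (by simp; omega) (by simp; omega)]
    have w2 : cs (idx D d (D.deg da + D.deg db)) = cs (idx D d (D.deg m)) := by rw [hdeg]
    have w5 : ((⟨da, front (D.deg da) (front (D.deg m) cs (fb (Fin.last (D.deg db))))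
        (fa (Fin.last (D.deg da)))⟩ : compIdx D C) = ⟨da, fa⟩) ↔
        front (D.deg da) cs (fa (Fin.last (D.deg da))) = fa := by
      rw [compIdx_mk_inj, front_front cs _ _ _ _ (by omega) (by omega)]
    have w6 : ((⟨db, back (D.deg da) (D.deg db) (front (D.deg m) cs (fb (Fin.last (D.deg db))))
        (fb 0)⟩ : compIdx D C) = ⟨db, fb⟩) ↔
        back (D.deg da) (D.deg db)
          (front (D.deg da + D.deg db) cs (fb (Fin.last (D.deg db)))) (fb 0) = fb := by
      have hw : ∀ x z : C.ι, back (D.deg da) (D.deg db) (front (D.deg da + D.deg db) cs x) z =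
          back (D.deg da) (D.deg db) (front (D.deg m) cs x) z := by
        intro x z; rw [hdeg]
      rw [compIdx_mk_inj, hw]
    have w7 : ((⟨dc, back (D.deg m) (D.deg dc) cs (fc 0)⟩ : compIdx D C) = ⟨dc, fc⟩) ↔
        back (D.deg da + D.deg db) (D.deg dc) cs (fc 0) = fc := by
      have hw : back (D.deg da + D.deg db) (D.deg dc) cs (fc 0) =
          back (D.deg m) (D.deg dc) cs (fc 0) := by rw [hdeg]
      rw [compIdx_mk_inj, hw]
    rw [w1, w2]
    split_ifs with h1 h2 h3 <;> try ring
    · exact absurd (by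
        simp only [Prod.mk.injEq] at h1
        exact ⟨w5.mp h1.1, w6.mp h1.2.1, w7.mp h1.2.2⟩) h2
    · exact absurd (by
        simp only [Prod.mk.injEq]
        exact ⟨w5.mpr h3.1, w6.mpr h3.2.1, w7.mpr h3.2.2⟩) h1


open Classical in
lemma claimR (D C : BasedGradedCoalgebra K) [DecidableEq (compIdx D C)]
    (hD4 : ∀ b p, D.delta b p ≠ 0 → D.deg p.1 + D.deg p.2 = D.deg b)
    (hC' : ∀ (b x y z : C.ι),
      (∑ p ∈ (C.delta b).support, if p.2 = z then C.delta b p * C.delta p.1 (x, y) else 0) =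
      (∑ p ∈ (C.delta b).support, if p.1 = x then C.delta b p * C.delta p.2 (y, z) else 0))
    (d : D.ι) (cs : Fin (D.deg d + 1) → C.ι) (da : D.ι) (fa : Fin (D.deg da + 1) → C.ι)
    (db : D.ι) (fb : Fin (D.deg db + 1) → C.ι) (dc : D.ι) (fc : Fin (D.deg dc + 1) → C.ι)
    (q : D.ι × D.ι) (hq : D.delta d q ≠ 0) :
    (∑ r ∈ (C.delta (cs (idx D d (D.deg q.1)))).support,
      ∑ z' ∈ ((D.delta q.2).support.sigma fun q' =>
          (C.delta (back (D.deg q.1) (D.deg q.2) cs r.2 (idx D q.2 (D.deg q'.1)))).support),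
        D.delta d q * C.delta (cs (idx D d (D.deg q.1))) r *
            (D.delta q.2 z'.1 *
              C.delta (back (D.deg q.1) (D.deg q.2) cs r.2 (idx D q.2 (D.deg z'.1.1))) z'.2) *
          (if ((⟨q.1, front (D.deg q.1) cs r.1⟩ : compIdx D C),
                (⟨z'.1.1, front (D.deg z'.1.1) (back (D.deg q.1) (D.deg q.2) cs r.2)
                    z'.2.1⟩ : compIdx D C),
                (⟨z'.1.2, back (D.deg z'.1.1) (D.deg z'.1.2) (back (D.deg q.1) (D.deg q.2) cs r.2)
                    z'.2.2⟩ : compIdx D C)) =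
              ((⟨da, fa⟩ : compIdx D C), (⟨db, fb⟩ : compIdx D C), (⟨dc, fc⟩ : compIdx D C))
            then 1 else 0)) =
    (if q.1 = da then D.delta d q * D.delta q.2 (db, dc) else 0) *
      Phi D C d cs da fa db fb dc fc := by
  obtain ⟨m1, m⟩ := q
  dsimp only at hq ⊢
  by_cases hm1 : m1 = da
  swap
  · rw [if_neg hm1, zero_mul]
    refine Finset.sum_eq_zero fun r hr => Finset.sum_eq_zero fun z' hz' => ?_
    refine mul_eq_zero_of_right _ (if_neg ?_)
    intro hcon
    simp only [Prod.mk.injEq] at hcon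
    exact hm1 (congrArg Sigma.fst hcon.1)
  subst m1
  rw [if_pos rfl]
  refine (Finset.sum_congr rfl fun r hr =>
    Finset.sum_eq_single (⟨(db, dc), (fb (Fin.last (D.deg db)), fc 0)⟩ : cSig D C)
      (by
        rintro ⟨⟨x1, x2⟩, y1, y2⟩ hz' hne
        refine mul_eq_zero_of_right _ (if_neg ?_)
        intro hcon
        simp only [Prod.mk.injEq] at hcon
        obtain ⟨h1, h2, h3⟩ := hcon
        have hx1 : x1 = db := congrArg Sigma.fst h2
        subst x1
        have hx2 : x2 = dc := congrArg Sigma.fst h3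
        subst x2
        rw [compIdx_mk_inj] at h2 h3
        apply hne
        have e1 : y1 = fb (Fin.last (D.deg db)) := by
          rw [← h2, front_apply_last]
        have e2 : y2 = fc 0 := by
          rw [← h3, back_apply_zero]
        rw [e1, e2]
      )
      (by
        intro hz0
        rcases (by
          by_cases hA : (db, dc) ∈ (D.delta m).support
          · exact Or.inr (Finsupp.notMem_support_iff.mp
              (fun h => hz0 (Finset.mem_sigma.mpr ⟨hA, h⟩)))
          · exact Or.inl (Finsupp.notMem_support_iff.mp hA) :
            D.delta m (db, dc) = 0 ∨
            C.delta (back (D.deg da) (D.deg m) cs r.2 (idx D m (D.deg db)))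
              (fb (Fin.last (D.deg db)), fc 0) = 0) with h | h <;>
          simp [h]
      )).trans ?_
  by_cases hdm : D.delta m (db, dc) = 0
  · simp [hdm]
  have hdeg := hD4 m (db, dc) hdm
  have hnd := hD4 d (da, m) hq
  dsimp only at hdeg hnd
  rcases Nat.eq_zero_or_pos (D.deg db) with hb0 | hbpos
  · -- D.deg db = 0
    unfold Phi
    rw [if_neg (by omega)]
    have wfb : fb (Fin.last (D.deg db)) = fb 0 := congrArg fb (Fin.ext (by simp [hb0]))
    have wA : ∀ x : C.ι, back (D.deg da) (D.deg m) cs x (idx D m (D.deg db)) = x := by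
      intro x
      rw [idx_eq D m _ (by omega)]
      exact back_apply_bad _ _ _ _ _ (by simp; omega)
    have w5 : ∀ y : C.ι, ((⟨da, front (D.deg da) cs y⟩ : compIdx D C) = ⟨da, fa⟩) ↔
        (y = fa (Fin.last (D.deg da)) ∧
          front (D.deg da) cs (fa (Fin.last (D.deg da))) = fa) := by
      intro y; rw [compIdx_mk_inj, front_eq_iff]
    have w6 : ∀ x y : C.ι,
        ((⟨db, front (D.deg db) (back (D.deg da) (D.deg m) cs x) y⟩ : compIdx D C) = ⟨db, fb⟩) ↔
          y = fb 0 := by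
      intro x y
      rw [compIdx_mk_inj, front_eq_iff_of_zero _ (D.deg db) hb0]
    have w7 : ∀ x y : C.ι,
        ((⟨dc, back (D.deg db) (D.deg dc) (back (D.deg da) (D.deg m) cs x) y⟩ : compIdx D C) =
          ⟨dc, fc⟩) ↔ (y = fc 0 ∧ back (D.deg da) (D.deg dc) cs (fc 0) = fc) := by
      intro x y
      have hw : ∀ y' : C.ι, back (D.deg db) (D.deg dc) (back (D.deg da) (D.deg m) cs x) y' =
          back (D.deg da) (D.deg dc) cs y' := by
        intro y'
        rw [back_back cs (D.deg da) (D.deg db) (D.deg dc) (D.deg m) x y' (by omega) (by omega)]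
        have hz : D.deg da + D.deg db = D.deg da := by omega
        rw [hz]
      rw [compIdx_mk_inj, hw, back_eq_iff]
    by_cases hco : (front (D.deg da) cs (fa (Fin.last (D.deg da))) = fa ∧
        back (D.deg da) (D.deg dc) cs (fc 0) = fc)
    · rw [if_pos hco, hC' (cs (idx D d (D.deg da))) (fa (Fin.last (D.deg da))) (fb 0) (fc 0),
        Finset.mul_sum]
      refine Finset.sum_congr rfl fun r hr => ?_
      dsimp only
      rw [wA r.2, wfb]
      split_ifs with h1 h2 h3 <;> try ring
      · simp only [Prod.mk.injEq] at h1
        exact absurd ((w5 r.1).mp h1.1).1 h2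
      · exact absurd (by
          simp only [Prod.mk.injEq]
          exact ⟨(w5 r.1).mpr ⟨h3, hco.1⟩, (w6 r.2 (fb 0)).mpr rfl,
            (w7 r.2 (fc 0)).mpr ⟨rfl, hco.2⟩⟩) h1
    · rw [if_neg hco, mul_zero]
      refine Finset.sum_eq_zero fun r hr => ?_
      refine mul_eq_zero_of_right _ (if_neg ?_)
      dsimp only
      intro hcon
      simp only [Prod.mk.injEq] at hcon
      exact hco ⟨((w5 r.1).mp hcon.1).2, ((w7 r.2 (fc 0)).mp hcon.2.2).2⟩
  · -- 0 < D.deg db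
    unfold Phi
    rw [if_pos hbpos]
    refine (Finset.sum_eq_single (fa (Fin.last (D.deg da)), fb 0)
      (by
        rintro ⟨u1, u2⟩ hr hne
        refine mul_eq_zero_of_right _ (if_neg ?_)
        intro hcon
        simp only [Prod.mk.injEq] at hcon
        obtain ⟨h1, h2, h3⟩ := hcon
        rw [compIdx_mk_inj] at h1 h2
        apply hne
        have e1 : u1 = fa (Fin.last (D.deg da)) := by
          rw [← h1, front_apply_last]
        have e2 : u2 = fb 0 := by
          have := congrFun h2 0
          rw [front_apply_lt _ _ _ _ (by simpa using hbpos) (by simp),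
            back_apply_bad cs _ _ _ _ (by simp)] at this
          exact this
        rw [e1, e2]
      ) (by
        intro hr0
        rw [Finsupp.notMem_support_iff.mp hr0]
        ring
      )).trans ?_
    have w1 : back (D.deg da) (D.deg m) cs (fb 0) (idx D m (D.deg db)) =
        cs (idx D d (D.deg da + D.deg db)) := by
      rw [idx_eq D m _ (by omega), idx_eq D d _ (by omega),
        back_apply_pos _ _ _ _ _ (by simpa using hbpos) (by simp; omega)]
    have w5 : ((⟨da, front (D.deg da) cs (fa (Fin.last (D.deg da)))⟩ : compIdx D C) = ⟨da, fa⟩) ↔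
        front (D.deg da) cs (fa (Fin.last (D.deg da))) = fa := compIdx_mk_inj
    have w6 : ((⟨db, front (D.deg db) (back (D.deg da) (D.deg m) cs (fb 0))
        (fb (Fin.last (D.deg db)))⟩ : compIdx D C) = ⟨db, fb⟩) ↔
        back (D.deg da) (D.deg db)
          (front (D.deg da + D.deg db) cs (fb (Fin.last (D.deg db)))) (fb 0) = fb := by
      rw [compIdx_mk_inj, back_front_eq_front_back cs (D.deg da) (D.deg db) (D.deg m)
        (fb 0) (fb (Fin.last (D.deg db))) hbpos (by omega) (by omega)]
    have w7 : ((⟨dc, back (D.deg db) (D.deg dc) (back (D.deg da) (D.deg m) cs (fb 0))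
        (fc 0)⟩ : compIdx D C) = ⟨dc, fc⟩) ↔
        back (D.deg da + D.deg db) (D.deg dc) cs (fc 0) = fc := by
      rw [compIdx_mk_inj, back_back cs (D.deg da) (D.deg db) (D.deg dc) (D.deg m) (fb 0) (fc 0)
        (by omega) (by omega)]
    rw [w1]
    split_ifs with h1 h2 h3 <;> try ring
    · exact absurd (by
        simp only [Prod.mk.injEq] at h1
        exact ⟨w5.mp h1.1, w6.mp h1.2.1, w7.mp h1.2.2⟩) h2
    · exact absurd (by
        simp only [Prod.mk.injEq]
        exact ⟨w5.mpr h3.1, w6.mpr h3.2.1, w7.mpr h3.2.2⟩) h1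

open Classical in
lemma main_identity [DecidableEq (compIdx D C)] (hC : C.IsCoalgebra) (hD : D.IsCoalgebra)
    (e : compIdx D C) (t : compIdx D C × compIdx D C × compIdx D C) :
    (∑ z ∈ cFin D C e, ∑ z' ∈ cFin D C (cP1 D C e z),
      cKap D C e z * cKap D C (cP1 D C e z) z' *
        (if (cP1 D C (cP1 D C e z) z', cP2 D C (cP1 D C e z) z', cP2 D C e z) = t then 1 else 0)) =
    (∑ z ∈ cFin D C e, ∑ z' ∈ cFin D C (cP2 D C e z),
      cKap D C e z * cKap D C (cP2 D C e z) z' *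
        (if (cP1 D C e z, cP1 D C (cP2 D C e z) z', cP2 D C (cP2 D C e z) z') = t then 1 else 0)) := by
  obtain ⟨d, cs⟩ := e
  obtain ⟨⟨da, fa⟩, ⟨db, fb⟩, ⟨dc, fc⟩⟩ := t
  have hD4 := hD.2.2.2.1
  have hD' := scalar_coassoc D hD.1
  have hC' := scalar_coassoc C hC.1
  simp only [cFin, cKap, cP1, cP2]
  trans (∑ q ∈ (D.delta d).support,
      (if q.2 = dc then D.delta d q * D.delta q.1 (da, db) else 0) *
        Phi D C d cs da fa db fb dc fc)
  · refine (Finset.sum_sigma _ _ _).trans (Finset.sum_congr rfl fun q hq => ?_)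
    convert claimL D C hD4 d cs da fa db fb dc fc q (Finsupp.mem_support_iff.mp hq) using 1
    exact Finset.sum_congr rfl fun _ _ => Finset.sum_congr rfl fun _ _ => by congr 1; exact if_congr Iff.rfl rfl rfl
  trans (∑ q ∈ (D.delta d).support,
      (if q.1 = da then D.delta d q * D.delta q.2 (db, dc) else 0) *
        Phi D C d cs da fa db fb dc fc)
  · rw [← Finset.sum_mul, ← Finset.sum_mul, hD' d da db dc]
  refine Eq.symm ((Finset.sum_sigma _ _ _).trans (Finset.sum_congr rfl fun q hq => ?_))
  convert claimR D C hD4 hC' d cs da fa db fb dc fc q (Finsupp.mem_support_iff.mp hq) using 1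
  exact Finset.sum_congr rfl fun _ _ => Finset.sum_congr rfl fun _ _ => by congr 1; exact if_congr Iff.rfl rfl rfl

end BasedGradedCoalgebra

open BasedGradedCoalgebra

/-- for graded coalgebras `C` and `D`, the compositional coproduct on
`D ∘ C = ⊕_{n≥0} D_n ⊗ C^{⊗(n+1)}` is coassociative. -/
theorem stmt_4 (K : Type) [Field K] (C D : BasedGradedCoalgebra K)
    (hC : C.IsCoalgebra) (hD : D.IsCoalgebra) :
    ∀ x : compIdx D C →₀ K,
      (TensorProduct.assoc K (compIdx D C →₀ K) (compIdx D C →₀ K) (compIdx D C →₀ K))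
          ((TensorProduct.map (compComul D C) LinearMap.id) (compComul D C x)) =
        (TensorProduct.map LinearMap.id (compComul D C)) (compComul D C x) := by
  classical
  rw [compComul_eq_gen]
  exact (gen_coassoc_iff _ _ _ _).mpr (main_identity D C hC hD)
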